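/- Let R be a commutative ring with a pre-λ-ring structure λ. Then the polynomial ring R[z] carries a pre-λ-ring structure determined by λ_{a·zᵏ}(T) = λₐ(zᵏT) for a ∈ R and k ≥ 0, extended by the additive-to-multiplicative property; in particular for any polynomial p(z) = Σₖ aₖ zᵏ, the series λ_{p}(T) = Πₖ λ_{aₖ}(zᵏ T) satisfies λ_{p+q}(T) = λ_p(T)·λ_q(T) and λ_p(T) = 1 + p·T + O(T²). -/

import Mathlib

/-- Let `R` be a commutative ring with a pre-λ-ring structure `lam` (so
`lam (a+b) = lam a * lam b`, `lam a = 1 + aT + O(T²)`). Then the polynomial ring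
`R[z]` carries a pre-λ-ring structure determined by `λ_{a·zᵏ}(T) = λₐ(zᵏT)`: for a
polynomial `p = Σₖ aₖzᵏ`, the series `L p = Πₖ λ_{aₖ}(zᵏT)` satisfies
`L (p+q) = L p · L q` and `L p = 1 + p·T + O(T²)`. -/
theorem polynomial_pre_lambda (R : Type*) [CommRing R]
    (lam : R → PowerSeries R)
    (hadd : ∀ a b : R, lam (a + b) = lam a * lam b)
    (h0 : ∀ a : R, PowerSeries.constantCoeff (lam a) = 1)
    (h1 : ∀ a : R, PowerSeries.coeff 1 (lam a) = a)
    (L : Polynomial R → PowerSeries (Polynomial R))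
    (hL : ∀ p : Polynomial R,
      L p = ∏ k ∈ p.support,
        PowerSeries.mk fun n =>
          Polynomial.C (PowerSeries.coeff n (lam (p.coeff k))) * Polynomial.X ^ (k * n)) :
    (∀ p q : Polynomial R, L (p + q) = L p * L q) ∧
    (∀ p : Polynomial R, PowerSeries.constantCoeff (L p) = 1) ∧
    (∀ p : Polynomial R, PowerSeries.coeff 1 (L p) = p) := by
  classical
  -- the ring hom sending f(T) to f(X^k T) with coefficients mapped by C
  set φ : ℕ → (PowerSeries R →+* PowerSeries (Polynomial R)) := fun k =>
    (PowerSeries.rescale ((Polynomial.X : Polynomial R) ^ k)).comp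
      (PowerSeries.map (Polynomial.C : R →+* Polynomial R)) with hφ
  have hφcoeff : ∀ k n (f : PowerSeries R),
      PowerSeries.coeff n (φ k f)
        = Polynomial.C (PowerSeries.coeff n f) * Polynomial.X ^ (k * n) := by
    intro k n f
    rw [hφ]
    simp only [RingHom.comp_apply, PowerSeries.coeff_rescale, PowerSeries.coeff_map, ← pow_mul]
    ring
  have hfac : ∀ (a : R) (k : ℕ),
      (PowerSeries.mk fun n =>
        Polynomial.C (PowerSeries.coeff n (lam a)) * Polynomial.X ^ (k * n)) = φ k (lam a) := by
    intro a k
    ext n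
    simp [hφcoeff]
  -- lam 0 = 1
  have hlam0 : lam 0 = 1 := by
    have h := hadd 0 0
    rw [add_zero] at h
    have hu := PowerSeries.mul_invOfUnit (lam 0) 1 (by simpa using h0 0)
    calc lam 0 = lam 0 * (lam 0 * PowerSeries.invOfUnit (lam 0) 1) := by rw [hu, mul_one]
      _ = lam 0 * lam 0 * PowerSeries.invOfUnit (lam 0) 1 := (mul_assoc _ _ _).symm
      _ = lam 0 * PowerSeries.invOfUnit (lam 0) 1 := by rw [← h]
      _ = 1 := hu
  -- L as a product over any set containing the support
  have hL' : ∀ (p : Polynomial R) (s : Finset ℕ), p.support ⊆ s →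
      L p = ∏ k ∈ s, φ k (lam (p.coeff k)) := by
    intro p s hs
    rw [hL p]
    rw [Finset.prod_subset hs]
    · exact Finset.prod_congr rfl fun k _ => hfac _ _
    · intro k _ hk
      rw [hfac, Polynomial.notMem_support_iff.mp hk, hlam0, map_one]
  refine ⟨?_, ?_, ?_⟩
  · intro p q
    set s := p.support ∪ q.support with hs
    have hsub : (p + q).support ⊆ s := Polynomial.support_add
    rw [hL' (p + q) s hsub, hL' p s Finset.subset_union_left,
      hL' q s Finset.subset_union_right, ← Finset.prod_mul_distrib]
    refine Finset.prod_congr rfl fun k _ => ?_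
    rw [Polynomial.coeff_add, hadd, map_mul]
  · intro p
    rw [hL' p p.support (le_refl _), map_prod]
    refine Finset.prod_eq_one fun k _ => ?_
    have := hφcoeff k 0 (lam (p.coeff k))
    simpa [h0] using this
  · intro p
    rw [hL' p p.support (le_refl _)]
    have key : ∀ (s : Finset ℕ) (g : ℕ → R),
        PowerSeries.coeff 1 (∏ k ∈ s, φ k (lam (g k)))
          = ∑ k ∈ s, Polynomial.C (g k) * Polynomial.X ^ k := by
      intro s g
      induction s using Finset.induction with
      | empty => simp
      | insert a t h ih =>
        rw [Finset.prod_insert h, PowerSeries.coeff_one_mul, ih, Finset.sum_insert h]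
        have hc0 : ∀ k, PowerSeries.constantCoeff (φ k (lam (g k))) = 1 := by
          intro k
          have := hφcoeff k 0 (lam (g k))
          simpa [h0] using this
        have hcp : PowerSeries.constantCoeff (∏ k ∈ t, φ k (lam (g k))) = 1 := by
          rw [map_prod]; exact Finset.prod_eq_one fun k _ => hc0 k
        rw [hcp, hc0, mul_one, mul_one, hφcoeff, h1, mul_one]
    rw [key]
    conv_rhs => rw [Polynomial.as_sum_support_C_mul_X_pow p]
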